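/- If (a,a) ≠ 0, the Eichler transvection factors as a product of two reflections: t(e,a) = s_a ∘ s_{a + ½(a,a)e}, where s_v(x) = x − 2((x,v)/(v,v))v; consequently t(e,a) has determinant 1. -/

import Mathlib

/-- The Eichler transvection `t(e,a)(v) = v − (a,v)e + (e,v)a − ½(a,a)(e,v)e`. -/
def eichler {V : Type*} [AddCommGroup V] [Module ℚ V]
    (B : V →ₗ[ℚ] V →ₗ[ℚ] ℚ) (e a v : V) : V :=
  v - (B a v) • e + (B e v) • a - (B a a / 2 * B e v) • e

/-- The reflection `s_u(x) = x − 2((x,u)/(u,u))·u` along a vector `u`. -/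
def reflAlong {V : Type*} [AddCommGroup V] [Module ℚ V]
    (B : V →ₗ[ℚ] V →ₗ[ℚ] ℚ) (u x : V) : V :=
  x - (2 * B x u / B u u) • u

/-- The Eichler transvection as a bundled linear map. -/
noncomputable def eichlerMap {V : Type*} [AddCommGroup V] [Module ℚ V]
    (B : V →ₗ[ℚ] V →ₗ[ℚ] ℚ) (e a : V) : V →ₗ[ℚ] V :=
  LinearMap.id - (B a).smulRight e + (B e).smulRight a
    - (B a a / 2) • (B e).smulRight e

/-- if `(a,a) ≠ 0`, the Eichler transvection factors as a product
of two reflections `t(e,a) = s_a ∘ s_{a + ½(a,a)e}`; consequently it has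
determinant `1`. -/
theorem eichler_as_reflections {V : Type*} [AddCommGroup V] [Module ℚ V]
    [FiniteDimensional ℚ V]
    (B : V →ₗ[ℚ] V →ₗ[ℚ] ℚ) (hsymm : ∀ x y, B x y = B y x)
    (e a : V) (he : B e e = 0) (ha : B e a = 0) (haa : B a a ≠ 0) :
    (∀ v : V, eichler B e a v = reflAlong B a (reflAlong B (a + (B a a / 2) • e) v)) ∧
    (∀ v : V, eichlerMap B e a v = eichler B e a v) ∧
    LinearMap.det (eichlerMap B e a) = 1 := by
  have hae : B a e = 0 := by rw [hsymm]; exact ha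
  refine ⟨?_, ?_, ?_⟩
  · intro v
    simp only [eichler, reflAlong, map_add, map_sub, map_smul, LinearMap.add_apply,
      LinearMap.sub_apply, LinearMap.smul_apply, smul_eq_mul, he, ha, hae,
      hsymm v a, hsymm v e]
    match_scalars <;> field_simp <;> ring
  · intro v
    simp [eichlerMap, eichler, LinearMap.smulRight, sub_smul, smul_smul]
  · set N : V →ₗ[ℚ] V := eichlerMap B e a - LinearMap.id with hNdef
    have hφ : eichlerMap B e a = LinearMap.id + N := by rw [hNdef]; abel
    have hNapp : ∀ v, N v = -(B a v) • e + (B e v) • a - (B a a / 2 * B e v) • e := by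
      intro v
      simp [hNdef, eichlerMap, LinearMap.smulRight, smul_smul, neg_smul]
      abel
    have hN3 : (N : Module.End ℚ V) ^ 3 = 0 := by
      ext v
      show N (N (N v)) = 0
      simp only [hNapp, map_add, map_sub, map_smul, smul_eq_mul, he, ha, hae, mul_zero,
        zero_mul, zero_smul, smul_zero, sub_zero, zero_add, add_zero, neg_zero, zero_sub,
        smul_add, smul_sub, smul_smul, smul_neg, neg_smul, neg_neg, map_neg, mul_neg, neg_mul]
    have hNnil : IsNilpotent (N : Module.End ℚ V) := ⟨3, hN3⟩
    have hcp : (N : Module.End ℚ V).charpoly = Polynomial.X ^ Module.finrank ℚ V :=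
      hNnil.charpoly_eq_X_pow_finrank
    -- pass to matrices
    let b := Module.finBasis ℚ V
    set M : Matrix (Fin (Module.finrank ℚ V)) (Fin (Module.finrank ℚ V)) ℚ :=
      LinearMap.toMatrix b b N with hM
    have hMcp : M.charpoly = Polynomial.X ^ Module.finrank ℚ V := by
      rw [hM, LinearMap.charpoly_toMatrix]; exact hcp
    have heval : M.charpoly.eval (-1) =
        (Matrix.scalar (Fin (Module.finrank ℚ V)) (-1 : ℚ) - M).det := by
      rw [Matrix.charpoly, eval_det, Matrix.matPolyEquiv_charmatrix,
        Polynomial.eval_sub, Polynomial.eval_X, Polynomial.eval_C]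
    have hscal : Matrix.scalar (Fin (Module.finrank ℚ V)) (-1 : ℚ) - M = -(1 + M) := by
      ext i j
      rcases eq_or_ne i j with rfl | hij
      · simp only [Matrix.sub_apply, Matrix.scalar_apply, Matrix.diagonal_apply_eq,
          Matrix.neg_apply, Matrix.add_apply, Matrix.one_apply_eq]
        ring
      · simp [Matrix.scalar_apply, Matrix.diagonal_apply_ne _ hij, Matrix.one_apply_ne hij]
    have h1 : M.charpoly.eval (-1) = (-1 : ℚ) ^ Module.finrank ℚ V := by
      rw [hMcp]; simp
    have h2 : (Matrix.scalar (Fin (Module.finrank ℚ V)) (-1 : ℚ) - M).det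
        = (-1 : ℚ) ^ Module.finrank ℚ V * (1 + M).det := by
      rw [hscal, Matrix.det_neg, Fintype.card_fin]
    have hpow : ((-1 : ℚ) ^ Module.finrank ℚ V) ≠ 0 := by
      exact pow_ne_zero _ (by norm_num)
    have hdet1M : (1 + M).det = 1 := by
      have h3 := heval
      rw [h1, h2] at h3
      have h4 : (-1 : ℚ) ^ Module.finrank ℚ V * 1
          = (-1 : ℚ) ^ Module.finrank ℚ V * (1 + M).det := by
        rw [mul_one]; exact h3
      exact (mul_left_cancel₀ hpow h4).symm
    have hmat : LinearMap.toMatrix b b (eichlerMap B e a) = 1 + M := by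
      rw [hφ, map_add, LinearMap.toMatrix_id, hM]
    rw [← LinearMap.det_toMatrix b, hmat, hdet1M]
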